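/- The minimum number of labels of a crossing-free infinite-backbone labeling of P equals the minimum number of labels of a crossing-free infinite-backbone labeling of the clustered point set C(P); that is, NL(P) = NL(C(P)). -/

import Mathlib

/-- A crossing-free infinite-backbone labeling of the point set `P` (points in the plane,
colored by `c`): `L` is the finite set of label `y`-coordinates (pairwise distinct since it
is a `Finset`), `col` gives the color of the label at each position, and `f` assigns each
point to the `y`-coordinate of its label. -/
def IsCrossingFreeLabeling {C : Type*} (c : ℝ × ℝ → C) (P : Finset (ℝ × ℝ))
    (L : Finset ℝ) (col : ℝ → C) (f : ℝ × ℝ → ℝ) : Prop :=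
  (∀ p ∈ P, f p ∈ L) ∧
  (∀ p ∈ P, col (f p) = c p) ∧
  (∀ ℓ ∈ L, ∃ p ∈ P, f p = ℓ) ∧
  (∀ ℓ ∈ L, ∀ p ∈ P, ℓ ≠ p.2) ∧
  (∀ p ∈ P, ∀ ℓ ∈ L, ℓ ≠ f p → ¬ (min p.2 (f p) < ℓ ∧ ℓ < max p.2 (f p)))

/-- `NL c P` is the minimum number of labels over all crossing-free infinite-backbone
labelings of `P`. -/
noncomputable def NL {C : Type*} (c : ℝ × ℝ → C) (P : Finset (ℝ × ℝ)) : ℕ :=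
  sInf {k : ℕ | ∃ L col f, IsCrossingFreeLabeling c P L col f ∧ L.card = k}

open Finset

/-- A weak labeling: drop the surjectivity condition. -/
def WeakCF {C : Type*} (c : ℝ × ℝ → C) (P : Finset (ℝ × ℝ))
    (L : Finset ℝ) (col : ℝ → C) (f : ℝ × ℝ → ℝ) : Prop :=
  (∀ p ∈ P, f p ∈ L) ∧
  (∀ p ∈ P, col (f p) = c p) ∧
  (∀ ℓ ∈ L, ∀ p ∈ P, ℓ ≠ p.2) ∧
  (∀ p ∈ P, ∀ ℓ ∈ L, ℓ ≠ f p → ¬ (min p.2 (f p) < ℓ ∧ ℓ < max p.2 (f p)))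

lemma NL_le_of_weak {C : Type*} {c : ℝ × ℝ → C} {P : Finset (ℝ × ℝ)}
    {L : Finset ℝ} {col : ℝ → C} {f : ℝ × ℝ → ℝ} (h : WeakCF c P L col f) :
    NL c P ≤ L.card := by
  classical
  obtain ⟨h1, h2, h4, h5⟩ := h
  have hsub : P.image f ⊆ L := by
    intro ℓ hℓ
    obtain ⟨p, hp, rfl⟩ := mem_image.1 hℓ
    exact h1 p hp
  have hCF : IsCrossingFreeLabeling c P (P.image f) col f := by
    refine ⟨fun p hp => mem_image_of_mem f hp, h2, ?_, ?_, ?_⟩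
    · intro ℓ hℓ
      obtain ⟨p, hp, rfl⟩ := mem_image.1 hℓ
      exact ⟨p, hp, rfl⟩
    · intro ℓ hℓ p hp
      exact h4 ℓ (hsub hℓ) p hp
    · intro p hp ℓ hℓ hne
      exact h5 p hp ℓ (hsub hℓ) hne
  calc NL c P ≤ (P.image f).card := Nat.sInf_le ⟨P.image f, col, f, hCF, rfl⟩
    _ ≤ L.card := card_le_card hsub

lemma exists_CF {C : Type*} (c : ℝ × ℝ → C) (P : Finset (ℝ × ℝ))
    (hdist : ∀ p ∈ P, ∀ q ∈ P, p.2 = q.2 → p = q) :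
    ∃ L col f, IsCrossingFreeLabeling c P L col f := by
  classical
  set E : Finset ℝ := ((P ×ˢ P).image (fun pq => pq.2.2 - pq.1.2)).filter (fun d => 0 < d) with hE
  set ε : ℝ := if h : E.Nonempty then E.min' h / 2 else 1 with hε
  have hε0 : 0 < ε := by
    rw [hε]
    split_ifs with h
    · have := (mem_filter.1 (E.min'_mem h)).2
      linarith
    · norm_num
  have hgap : ∀ p ∈ P, ∀ q ∈ P, p.2 < q.2 → ε < q.2 - p.2 := by
    intro p hp q hq hlt
    have hmem : q.2 - p.2 ∈ E := by
      rw [hE]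
      refine mem_filter.2 ⟨mem_image.2 ⟨(p, q), mem_product.2 ⟨hp, hq⟩, rfl⟩, by simpa using by linarith⟩
    have hne : E.Nonempty := ⟨_, hmem⟩
    have h1 := E.min'_le _ hmem
    have h2 : 0 < E.min' hne := (mem_filter.1 (E.min'_mem hne)).2
    rw [hε, dif_pos hne]
    linarith
  set f : ℝ × ℝ → ℝ := fun p => p.2 + ε with hf
  set col : ℝ → C := fun y => if h : ∃ p ∈ P, p.2 + ε = y then c h.choose else c (0, 0) with hcol
  refine ⟨P.image f, col, f, ?_, ?_, ?_, ?_, ?_⟩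
  · exact fun p hp => mem_image_of_mem f hp
  · intro p hp
    have hex : ∃ r ∈ P, r.2 + ε = f p := ⟨p, hp, rfl⟩
    rw [hcol]
    simp only
    rw [dif_pos hex]
    obtain ⟨hr1, hr2⟩ := hex.choose_spec
    have : hex.choose = p := by
      apply hdist _ hr1 _ hp
      have : hex.choose.2 + ε = p.2 + ε := hr2
      linarith
    rw [this]
  · intro ℓ hℓ
    obtain ⟨r, hr, rfl⟩ := mem_image.1 hℓ
    exact ⟨r, hr, rfl⟩
  · intro ℓ hℓ r hr
    obtain ⟨s, hs, rfl⟩ := mem_image.1 hℓ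
    intro heq
    have hlt : s.2 < r.2 := by
      have : f s = r.2 := heq
      rw [hf] at this
      simp only at this
      linarith
    have := hgap s hs r hr hlt
    have : f s = r.2 := heq
    rw [hf] at this; simp only at this
    linarith [hgap s hs r hr hlt]
  · intro p hp ℓ hℓ hne
    obtain ⟨s, hs, rfl⟩ := mem_image.1 hℓ
    rintro ⟨hlo, hhi⟩
    have hfp : f p = p.2 + ε := rfl
    have hfs : f s = s.2 + ε := rfl
    rw [hfp] at hlo hhi
    rw [hfs] at hlo hhi hne
    rw [min_eq_left (by linarith)] at hlo
    rw [max_eq_right (by linarith)] at hhi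
    have hsp : s ≠ p := fun h => hne (by rw [h])
    have hsne : s.2 ≠ p.2 := fun h => hsp (hdist s hs p hp h)
    rcases lt_or_gt_of_ne hsne with h | h
    · have := hgap s hs p hp h; linarith
    · have := hgap p hp s hs h; linarith

lemma nl_achieve {C : Type*} (c : ℝ × ℝ → C) (P : Finset (ℝ × ℝ))
    (hdist : ∀ p ∈ P, ∀ q ∈ P, p.2 = q.2 → p = q) :
    ∃ L col f, IsCrossingFreeLabeling c P L col f ∧ L.card = NL c P := by
  obtain ⟨L, col, f, h⟩ := exists_CF c P hdist
  have hne : {k : ℕ | ∃ L col f, IsCrossingFreeLabeling c P L col f ∧ L.card = k}.Nonempty :=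
    ⟨L.card, L, col, f, h, rfl⟩
  have := Nat.sInf_mem hne
  obtain ⟨L', col', f', h', hc⟩ := this
  exact ⟨L', col', f', h', hc⟩

lemma NL_mono {C : Type*} (c : ℝ × ℝ → C) {P Q : Finset (ℝ × ℝ)}
    (hdist : ∀ p ∈ P, ∀ q ∈ P, p.2 = q.2 → p = q) (hQP : Q ⊆ P) :
    NL c Q ≤ NL c P := by
  obtain ⟨L, col, f, ⟨h1, h2, _, h4, h5⟩, hc⟩ := nl_achieve c P hdist
  have hw : WeakCF c Q L col f :=
    ⟨fun p hp => h1 p (hQP hp), fun p hp => h2 p (hQP hp),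
     fun ℓ hℓ p hp => h4 ℓ hℓ p (hQP hp), fun p hp => h5 p (hQP hp)⟩
  calc NL c Q ≤ L.card := NL_le_of_weak hw
    _ = NL c P := hc


lemma NL_insert_le {C : Type*} (c : ℝ × ℝ → C) (P' : Finset (ℝ × ℝ)) (p q : ℝ × ℝ)
    (hq : q ∈ P') (hab : p.2 < q.2) (hcpq : c p = c q)
    (hgap : ∀ r ∈ P', ¬ (p.2 ≤ r.2 ∧ r.2 < q.2))
    (hdist' : ∀ r ∈ P', ∀ s ∈ P', r.2 = s.2 → r = s) :
    NL c (insert p P') ≤ NL c P' := by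
  classical
  obtain ⟨L, col, f, ⟨h1, h2, h3, h4, h5⟩, hcard⟩ := nl_achieve c P' hdist'
  set a := p.2 with ha
  set b := q.2 with hb
  set T : Finset ℝ := L ∪ P'.image Prod.snd with hT
  set S : Finset ℝ := T.filter (fun t => t < a) with hS
  set ζ : ℝ := if h : S.Nonempty then (S.max' h + a) / 2 else a - 1 with hζ
  have hζa : ζ < a := by
    rw [hζ]; split_ifs with h
    · have : S.max' h < a := (mem_filter.1 (S.max'_mem h)).2
      linarith
    · linarith
  have hTζ : ∀ t ∈ T, t < a → t < ζ := by
    intro t ht hta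
    have htS : t ∈ S := mem_filter.2 ⟨ht, hta⟩
    have hne : S.Nonempty := ⟨t, htS⟩
    have := S.le_max' t htS
    rw [hζ, dif_pos hne]
    linarith
  have hgood : ∀ t ∈ T, t < ζ ∨ a ≤ t := by
    intro t ht
    rcases lt_or_ge t a with h | h
    · exact Or.inl (hTζ t ht h)
    · exact Or.inr h
  set k : ℝ := (a - ζ) / (b - a) with hk
  have hk0 : 0 < k := div_pos (by linarith) (by linarith)
  have hbk : (b - a) * k = a - ζ := by
    have hba : b - a ≠ 0 := by linarith
    rw [hk]
    field_simp
  set θ : ℝ → ℝ := fun y => if a ≤ y ∧ y < b then ζ + (y - a) * k else y with hθ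
  have θlow : ∀ y, y < a → θ y = y := by
    intro y h; rw [hθ]; simp only; rw [if_neg]; push_neg; intro h'; linarith
  have θhigh : ∀ y, b ≤ y → θ y = y := by
    intro y h; rw [hθ]; simp only; rw [if_neg]; push_neg; intro h'; linarith
  have θval : ∀ y, a ≤ y → y < b → θ y = ζ + (y - a) * k := by
    intro y h1' h2'; rw [hθ]; simp only; rw [if_pos ⟨h1', h2'⟩]
  have θmid : ∀ y, a ≤ y → y < b → ζ ≤ θ y ∧ θ y < a := by
    intro y h1' h2'
    rw [θval y h1' h2']
    constructor
    · have := mul_nonneg (by linarith : (0:ℝ) ≤ y - a) hk0.le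
      linarith
    · have : (y - a) * k < (b - a) * k := mul_lt_mul_of_pos_right (by linarith) hk0
      linarith
  have θlt : ∀ y z, (y < ζ ∨ a ≤ y) → (z < ζ ∨ a ≤ z) → y < z → θ y < θ z := by
    intro y z hy hz hyz
    rcases hy with hy | hy
    · rw [θlow y (by linarith)]
      rcases hz with hz | hz
      · rw [θlow z (by linarith)]; exact hyz
      · rcases lt_or_ge z b with hzb | hzb
        · have := θmid z hz hzb; linarith
        · rw [θhigh z hzb]; exact hyz
    · rcases lt_or_ge y b with hyb | hyb
      · have hy2 := θmid y hy hyb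
        rcases lt_or_ge z b with hzb | hzb
        · rw [θval y hy hyb, θval z (by linarith) hzb]
          have : (y - a) * k < (z - a) * k := mul_lt_mul_of_pos_right (by linarith) hk0
          linarith
        · rw [θhigh z hzb]; linarith
      · rw [θhigh y hyb, θhigh z (by linarith)]; exact hyz
  have θle : ∀ y z, (y < ζ ∨ a ≤ y) → (z < ζ ∨ a ≤ z) → y ≤ z → θ y ≤ θ z := by
    intro y z hy hz hyz
    rcases eq_or_lt_of_le hyz with rfl | h
    · exact le_rfl
    · exact (θlt y z hy hz h).le
  have θltiff : ∀ y z, (y < ζ ∨ a ≤ y) → (z < ζ ∨ a ≤ z) → (θ y < θ z ↔ y < z) := by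
    intro y z hy hz
    constructor
    · intro h
      by_contra h'
      push_neg at h'
      exact absurd h (not_lt.2 (θle z y hz hy h'))
    · exact θlt y z hy hz
  have θinj : ∀ y z, (y < ζ ∨ a ≤ y) → (z < ζ ∨ a ≤ z) → θ y = θ z → y = z := by
    intro y z hy hz h
    by_contra h'
    rcases lt_or_gt_of_ne h' with h'' | h''
    · exact absurd h (ne_of_lt (θlt y z hy hz h''))
    · exact absurd h.symm (ne_of_lt (θlt z y hz hy h''))
  set θinv : ℝ → ℝ := fun y => if ζ ≤ y ∧ y < a then a + (y - ζ) / k else y with hθi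
  have θinv_out : ∀ y, ¬ (ζ ≤ y ∧ y < a) → θinv y = y := by
    intro y h; rw [hθi]; simp only; rw [if_neg h]
  have θinv_in : ∀ y, ζ ≤ y → y < a → θinv y = a + (y - ζ) / k := by
    intro y h1' h2'; rw [hθi]; simp only; rw [if_pos ⟨h1', h2'⟩]
  have θinvθ : ∀ y, (y < ζ ∨ a ≤ y) → θinv (θ y) = y := by
    intro y hy
    rcases hy with hy | hy
    · rw [θlow y (by linarith)]
      rw [θinv_out y (by push_neg; intro h'; linarith)]
    · rcases lt_or_ge y b with hyb | hyb
      · have hm := θmid y hy hyb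
        rw [θinv_in _ hm.1 hm.2, θval y hy hyb]
        field_simp
        ring
      · rw [θhigh y hyb]
        rw [θinv_out y (by push_neg; intro h'; linarith)]
  -- positions
  have hLg : ∀ ℓ ∈ L, ℓ < ζ ∨ a ≤ ℓ := fun ℓ h => hgood ℓ (mem_union_left _ h)
  have hPg : ∀ r ∈ P', r.2 < ζ ∨ a ≤ r.2 := fun r h =>
    hgood _ (mem_union_right _ (mem_image_of_mem _ h))
  have hPpos : ∀ r ∈ P', r.2 < ζ ∨ b ≤ r.2 := by
    intro r hr
    rcases hPg r hr with h | h
    · exact Or.inl h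
    · right
      by_contra h'
      push_neg at h'
      exact hgap r hr ⟨h, h'⟩
  have hPfix : ∀ r ∈ P', θ r.2 = r.2 := by
    intro r hr
    rcases hPpos r hr with h | h
    · exact θlow _ (by linarith)
    · exact θhigh _ h
  have hbfix : θ b = b := θhigh b le_rfl
  have hnotab : ∀ ℓ ∈ L, θ ℓ < a ∨ b ≤ θ ℓ := by
    intro ℓ hℓ
    rcases hLg ℓ hℓ with h | h
    · rw [θlow ℓ (by linarith)]; exact Or.inl (by linarith)
    · rcases lt_or_ge ℓ b with h2 | h2
      · exact Or.inl (θmid ℓ h h2).2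
      · rw [θhigh ℓ h2]; exact Or.inr h2
  have hgmin : ∀ y z, (y < ζ ∨ a ≤ y) → (z < ζ ∨ a ≤ z) → (min y z < ζ ∨ a ≤ min y z) := by
    intro y z hy hz
    rcases le_total y z with h | h
    · rw [min_eq_left h]; exact hy
    · rw [min_eq_right h]; exact hz
  have hminθ : ∀ y z, (y < ζ ∨ a ≤ y) → (z < ζ ∨ a ≤ z) → min (θ y) (θ z) = θ (min y z) := by
    intro y z hy hz
    rcases le_total y z with h | h
    · rw [min_eq_left h, min_eq_left (θle y z hy hz h)]
    · rw [min_eq_right h, min_eq_right (θle z y hz hy h)]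
  have hmaxθ : ∀ y z, (y < ζ ∨ a ≤ y) → (z < ζ ∨ a ≤ z) → max (θ y) (θ z) = θ (max y z) := by
    intro y z hy hz
    rcases le_total y z with h | h
    · rw [max_eq_right h, max_eq_right (θle y z hy hz h)]
    · rw [max_eq_left h, max_eq_left (θle z y hz hy h)]
  have hpnot : ∀ r ∈ P', r ≠ p := by
    intro r hr he
    exact hgap r hr ⟨by rw [he], by rw [he]; exact hab⟩
  set f' : ℝ × ℝ → ℝ := fun r => if r = p then θ (f q) else θ (f r) with hf'
  have hf'p : f' p = θ (f q) := by rw [hf']; simp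
  have hf'r : ∀ r ∈ P', f' r = θ (f r) := by
    intro r hr; rw [hf']; simp only [if_neg (hpnot r hr)]
  set col' : ℝ → C := fun y => col (θinv y) with hcol'
  have hfqL : f q ∈ L := h1 q hq
  have hCF : IsCrossingFreeLabeling c (insert p P') (L.image θ) col' f' := by
    refine ⟨?_, ?_, ?_, ?_, ?_⟩
    · intro r hr
      rcases mem_insert.1 hr with rfl | hr
      · rw [hf'p]; exact mem_image_of_mem θ hfqL
      · rw [hf'r r hr]; exact mem_image_of_mem θ (h1 r hr)
    · intro r hr
      rcases mem_insert.1 hr with rfl | hr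
      · rw [hf'p, hcol']
        simp only
        rw [θinvθ _ (hLg _ hfqL), h2 q hq, hcpq]
      · rw [hf'r r hr, hcol']
        simp only
        rw [θinvθ _ (hLg _ (h1 r hr)), h2 r hr]
    · intro ℓ' hℓ'
      obtain ⟨ℓ0, hℓ0, rfl⟩ := mem_image.1 hℓ'
      obtain ⟨r, hr, hfr⟩ := h3 ℓ0 hℓ0
      exact ⟨r, mem_insert_of_mem hr, by rw [hf'r r hr, hfr]⟩
    · intro ℓ' hℓ' r hr
      obtain ⟨ℓ0, hℓ0, rfl⟩ := mem_image.1 hℓ'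
      rcases mem_insert.1 hr with rfl | hr
      · rcases hnotab ℓ0 hℓ0 with h | h
        · intro he; rw [he] at h; exact absurd h (by rw [← ha]; linarith)
        · intro he; rw [he] at h
          have : a < b := hab
          rw [← ha] at h
          linarith
      · rcases hLg ℓ0 hℓ0 with h | h
        · rw [θlow ℓ0 (by linarith)]; exact h4 ℓ0 hℓ0 r hr
        · rcases lt_or_ge ℓ0 b with h2 | h2
          · have hm := θmid ℓ0 h h2
            intro he
            rcases hPpos r hr with h3' | h3'
            · rw [he] at hm; linarith [hm.1]
            · rw [he] at hm; linarith [hm.2, hab]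
          · rw [θhigh ℓ0 h2]; exact h4 ℓ0 hℓ0 r hr
    · intro r hr ℓ' hℓ' hne
      obtain ⟨ℓ0, hℓ0, rfl⟩ := mem_image.1 hℓ'
      rcases mem_insert.1 hr with rfl | hr
      · -- the new point p
        rw [hf'p] at hne ⊢
        rintro ⟨hlo, hhi⟩
        rw [← ha] at hlo hhi
        have hFnotab := hnotab _ hfqL
        have hFneb : θ (f q) ≠ b := by
          rcases hLg _ hfqL with h | h
          · rw [θlow _ (by linarith)]; intro he; linarith
          · rcases lt_or_ge (f q) b with h2 | h2
            · have := (θmid _ h h2).2; intro he; linarith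
            · rw [θhigh _ h2]; exact h4 _ hfqL q hq
        rcases hFnotab with hF | hF
        · -- θ (f q) < a
          rw [min_eq_right hF.le] at hlo
          rw [max_eq_left hF.le] at hhi
          -- θ ℓ0 ∈ (θ (f q), a)
          have hfqb : f q < b := by
            have : θ (f q) < θ b := by rw [hbfix]; linarith
            exact (θltiff _ _ (hLg _ hfqL) (Or.inr hab.le) ).1 this
          have hl0b : ℓ0 < b := by
            have : θ ℓ0 < θ b := by rw [hbfix]; linarith
            exact (θltiff _ _ (hLg _ hℓ0) (Or.inr hab.le)).1 this
          have hfql0 : f q < ℓ0 := (θltiff _ _ (hLg _ hfqL) (hLg _ hℓ0)).1 hlo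
          exact h5 q hq ℓ0 hℓ0 (ne_of_gt hfql0)
            ⟨by rw [min_eq_right hfqb.le]; exact hfql0,
             by rw [max_eq_left hfqb.le]; exact hl0b⟩
        · -- b ≤ θ (f q), hence b < θ (f q)
          have hF' : b < θ (f q) := lt_of_le_of_ne hF (Ne.symm hFneb)
          rw [min_eq_left (by linarith)] at hlo
          rw [max_eq_right (by linarith)] at hhi
          -- a < θ ℓ0 < θ (f q)
          have hl0nb : θ ℓ0 ≠ b := by
            rcases hLg _ hℓ0 with h | h
            · rw [θlow _ (by linarith)]; intro he; linarith
            · rcases lt_or_ge ℓ0 b with h2 | h2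
              · have := (θmid _ h h2).2; intro he; linarith
              · rw [θhigh _ h2]; exact h4 _ hℓ0 q hq
          have hbl0 : b < θ ℓ0 := by
            rcases hnotab ℓ0 hℓ0 with h | h
            · linarith
            · exact lt_of_le_of_ne h (Ne.symm hl0nb)
          have hbl0' : b < ℓ0 := by
            have : θ b < θ ℓ0 := by rw [hbfix]; exact hbl0
            exact (θltiff _ _ (Or.inr hab.le) (hLg _ hℓ0)).1 this
          have hl0fq : ℓ0 < f q := (θltiff _ _ (hLg _ hℓ0) (hLg _ hfqL)).1 hhi
          have hbfq : b ≤ f q := by linarith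
          exact h5 q hq ℓ0 hℓ0 (ne_of_lt hl0fq)
            ⟨by rw [min_eq_left hbfq]; exact hbl0',
             by rw [max_eq_right hbfq]; exact hl0fq⟩
      · -- old point r
        rw [hf'r r hr] at hne ⊢
        rintro ⟨hlo, hhi⟩
        have hgr : r.2 < ζ ∨ a ≤ r.2 := hPg r hr
        have hgf : f r < ζ ∨ a ≤ f r := hLg _ (h1 r hr)
        have hgl : ℓ0 < ζ ∨ a ≤ ℓ0 := hLg _ hℓ0
        rw [← hPfix r hr, hminθ _ _ hgr hgf] at hlo
        rw [← hPfix r hr, hmaxθ _ _ hgr hgf] at hhi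
        have hlo' : min r.2 (f r) < ℓ0 :=
          (θltiff _ _ (hgmin _ _ hgr hgf) hgl).1 hlo
        have hhi' : ℓ0 < max r.2 (f r) := by
          have hgmax : max r.2 (f r) < ζ ∨ a ≤ max r.2 (f r) := by
            rcases le_total r.2 (f r) with h | h
            · rw [max_eq_right h]; exact hgf
            · rw [max_eq_left h]; exact hgr
          exact (θltiff _ _ hgl hgmax).1 hhi
        have hne0 : ℓ0 ≠ f r := by
          intro he; rw [he] at hne; exact hne rfl
        exact h5 r hr ℓ0 hℓ0 hne0 ⟨hlo', hhi'⟩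
  have hinjL : Set.InjOn θ ↑L := by
    intro y hy z hz h
    exact θinj y z (hLg y hy) (hLg z hz) h
  calc NL c (insert p P') ≤ (L.image θ).card := Nat.sInf_le ⟨L.image θ, col', f', hCF, rfl⟩
    _ = L.card := card_image_of_injOn hinjL
    _ = NL c P' := hcard

/-- `NL(P) = NL(C(P))` where the clustered point set `CP = C(P)` consists
of the topmost point of each maximal run of vertically consecutive equally-colored points of
`P`; equivalently, `p ∈ C(P)` iff `p ∈ P` and there is no point `q ∈ P` immediately above
`p` (i.e. `q` is above `p` with no point of `P` strictly between) having the same color as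
`p`. -/
theorem stmt3 {C : Type*} (c : ℝ × ℝ → C) (P CP : Finset (ℝ × ℝ))
    (hdist : ∀ p ∈ P, ∀ q ∈ P, p.2 = q.2 → p = q)
    (hCP : ∀ p : ℝ × ℝ, p ∈ CP ↔ p ∈ P ∧
      ¬ ∃ q ∈ P, p.2 < q.2 ∧ c q = c p ∧ ∀ r ∈ P, ¬ (p.2 < r.2 ∧ r.2 < q.2)) :
    NL c P = NL c CP := by
  classical
  suffices H : ∀ n (P CP : Finset (ℝ × ℝ)), P.card ≤ n →
      (∀ p ∈ P, ∀ q ∈ P, p.2 = q.2 → p = q) →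
      (∀ p : ℝ × ℝ, p ∈ CP ↔ p ∈ P ∧
        ¬ ∃ q ∈ P, p.2 < q.2 ∧ c q = c p ∧ ∀ r ∈ P, ¬ (p.2 < r.2 ∧ r.2 < q.2)) →
      NL c P = NL c CP by
    exact H P.card P CP le_rfl hdist hCP
  clear hdist hCP P CP
  intro n
  induction n with
  | zero =>
    intro P CP hcard hdist hCP
    have hP : P = ∅ := Finset.card_eq_zero.1 (Nat.le_zero.1 hcard)
    subst hP
    have hC : CP = ∅ := by
      ext r
      rw [hCP r]
      simp
    rw [hC]
  | succ n ih =>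
    intro P CP hcard hdist hCP
    by_cases hsub : ∀ r ∈ P, r ∈ CP
    · have hPC : P = CP :=
        Finset.Subset.antisymm (fun r hr => hsub r hr) (fun r hr => ((hCP r).1 hr).1)
      rw [hPC]
    · push_neg at hsub
      obtain ⟨p, hpP, hpCP⟩ := hsub
      have hex : ∃ q ∈ P, p.2 < q.2 ∧ c q = c p ∧ ∀ r ∈ P, ¬ (p.2 < r.2 ∧ r.2 < q.2) := by
        by_contra h
        exact hpCP ((hCP p).2 ⟨hpP, h⟩)
      obtain ⟨q, hqP, hpq, hcq, himm⟩ := hex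
      set P'' := P.erase p with hP''
      have hqne : q ≠ p := by intro he; rw [he] at hpq; exact lt_irrefl _ hpq
      have hq'' : q ∈ P'' := Finset.mem_erase.2 ⟨hqne, hqP⟩
      have hsub'' : P'' ⊆ P := Finset.erase_subset _ _
      have hdist'' : ∀ r ∈ P'', ∀ s ∈ P'', r.2 = s.2 → r = s :=
        fun r hr s hs => hdist r (hsub'' hr) s (hsub'' hs)
      have hCP'' : ∀ r : ℝ × ℝ, r ∈ CP ↔ r ∈ P'' ∧
          ¬ ∃ s ∈ P'', r.2 < s.2 ∧ c s = c r ∧ ∀ t ∈ P'', ¬ (r.2 < t.2 ∧ t.2 < s.2) := by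
        intro r
        constructor
        · intro hr
          obtain ⟨hrP, hrno⟩ := (hCP r).1 hr
          have hrne : r ≠ p := by intro he; rw [he] at hr; exact hpCP hr
          refine ⟨Finset.mem_erase.2 ⟨hrne, hrP⟩, ?_⟩
          rintro ⟨s, hs'', h1, h2, h3⟩
          have hsP : s ∈ P := hsub'' hs''
          by_cases hmid : r.2 < p.2 ∧ p.2 < s.2
          · have hqs : q = s := by
              rcases lt_trichotomy q.2 s.2 with h' | h' | h'
              · exact absurd ⟨lt_trans hmid.1 hpq, h'⟩ (h3 q hq'')
              · exact hdist q hqP s hsP h'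
              · exact absurd ⟨hmid.2, h'⟩ (himm s hsP)
            apply hrno
            refine ⟨p, hpP, hmid.1, ?_, ?_⟩
            · rw [← hcq, hqs, h2]
            · intro t htP
              rintro ⟨ht1, ht2⟩
              by_cases htp : t = p
              · rw [htp] at ht2; exact lt_irrefl _ ht2
              · exact h3 t (Finset.mem_erase.2 ⟨htp, htP⟩) ⟨ht1, lt_trans ht2 hmid.2⟩
          · apply hrno
            refine ⟨s, hsP, h1, h2, ?_⟩
            intro t htP
            rintro ⟨ht1, ht2⟩
            by_cases htp : t = p
            · rw [htp] at ht1 ht2; exact hmid ⟨ht1, ht2⟩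
            · exact h3 t (Finset.mem_erase.2 ⟨htp, htP⟩) ⟨ht1, ht2⟩
        · rintro ⟨hr'', hrno''⟩
          have hrP : r ∈ P := hsub'' hr''
          rw [hCP r]
          refine ⟨hrP, ?_⟩
          rintro ⟨s, hsP, h1, h2, h3⟩
          by_cases hsp : s = p
          · rw [hsp] at h1 h2 h3
            apply hrno''
            refine ⟨q, hq'', lt_trans h1 hpq, by rw [hcq, h2], ?_⟩
            intro t ht''
            rintro ⟨ht1, ht2⟩
            have htP : t ∈ P := hsub'' ht''
            have htp : t ≠ p := (Finset.mem_erase.1 ht'').1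
            rcases lt_trichotomy t.2 p.2 with h' | h' | h'
            · exact h3 t htP ⟨ht1, h'⟩
            · exact htp (hdist t htP p hpP h')
            · exact himm t htP ⟨h', ht2⟩
          · apply hrno''
            refine ⟨s, Finset.mem_erase.2 ⟨hsp, hsP⟩, h1, h2, ?_⟩
            intro t ht''
            exact h3 t (hsub'' ht'')
      have hcard'' : P''.card ≤ n := by
        rw [hP'', Finset.card_erase_of_mem hpP]
        omega
      have hIH := ih P'' CP hcard'' hdist'' hCP''
      have hle1 : NL c P'' ≤ NL c P := NL_mono c hdist hsub''
      have hle2 : NL c P ≤ NL c P'' := by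
        have hgap'' : ∀ r ∈ P'', ¬ (p.2 ≤ r.2 ∧ r.2 < q.2) := by
          rintro r hr ⟨h1', h2'⟩
          rcases eq_or_lt_of_le h1' with he | hlt
          · exact (Finset.mem_erase.1 hr).1 (hdist r (hsub'' hr) p hpP he.symm)
          · exact himm r (hsub'' hr) ⟨hlt, h2'⟩
        calc NL c P = NL c (insert p P'') := by rw [Finset.insert_erase hpP]
          _ ≤ NL c P'' := NL_insert_le c P'' p q hq'' hpq hcq.symm hgap'' hdist''
      rw [le_antisymm hle2 hle1, hIH]
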